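/- For a nilpotent operator Q (Q² = 0) on a finite-dimensional complex inner product space, the kernel of H = QQ† + Q†Q is linearly isomorphic to the quotient ker(Q)/im(Q) (the cohomology of Q). -/

import Mathlib

open LinearMap

theorem ground_states_iso_cohomology
    {V : Type*} [NormedAddCommGroup V] [InnerProductSpace ℂ V]
    [FiniteDimensional ℂ V]
    (Q H : V →ₗ[ℂ] V) (hQ : Q ∘ₗ Q = 0)
    (hH : H = Q ∘ₗ LinearMap.adjoint Q + LinearMap.adjoint Q ∘ₗ Q) :
    Nonempty (↥(LinearMap.ker H) ≃ₗ[ℂ]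
      (↥(LinearMap.ker Q) ⧸
        Submodule.comap (LinearMap.ker Q).subtype (LinearMap.range Q))) := by
  set Qd := LinearMap.adjoint Q with hQd
  -- ker H elements are killed by Q and Qd
  have key : ∀ x : V, H x = 0 → Q x = 0 ∧ Qd x = 0 := by
    intro x hx
    have h0 : (inner ℂ (H x) x : ℂ) = 0 := by rw [hx]; simp
    have hexp : (inner ℂ (H x) x : ℂ) = inner ℂ (Qd x) (Qd x) + inner ℂ (Q x) (Q x) := by
      rw [hH]
      simp only [LinearMap.add_apply, LinearMap.comp_apply, inner_add_left]
      rw [LinearMap.adjoint_inner_left]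
      congr 1
      conv_lhs => rw [show Q (Qd x) = (LinearMap.adjoint Qd) (Qd x) by
        rw [hQd, LinearMap.adjoint_adjoint]]
      rw [LinearMap.adjoint_inner_left, hQd]
    rw [h0] at hexp
    have h1 := hexp.symm
    rw [inner_self_eq_norm_sq_to_K, inner_self_eq_norm_sq_to_K] at h1
    have h1' : ((‖Qd x‖^2 + ‖Q x‖^2 : ℝ) : ℂ) = 0 := by push_cast; exact h1
    have h2 : ‖Qd x‖^2 + ‖Q x‖^2 = 0 := Complex.ofReal_eq_zero.mp h1'
    constructor
    · have : ‖Q x‖ = 0 := by nlinarith [norm_nonneg (Q x), norm_nonneg (Qd x)]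
      simpa using this
    · have : ‖Qd x‖ = 0 := by nlinarith [norm_nonneg (Q x), norm_nonneg (Qd x)]
      simpa using this
  have hsub : LinearMap.ker H ≤ LinearMap.ker Q := by
    intro x hx
    exact (key x hx).1
  -- the map
  let f : ↥(LinearMap.ker H) →ₗ[ℂ]
      (↥(LinearMap.ker Q) ⧸ Submodule.comap (LinearMap.ker Q).subtype (LinearMap.range Q)) :=
    (Submodule.mkQ _).comp (Submodule.inclusion hsub)
  refine ⟨LinearEquiv.ofBijective f ⟨?_, ?_⟩⟩
  · -- injective
    rw [← LinearMap.ker_eq_bot, LinearMap.ker_eq_bot']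
    intro x hx
    have : Submodule.inclusion hsub x ∈
        Submodule.comap (LinearMap.ker Q).subtype (LinearMap.range Q) := by
      rwa [← Submodule.Quotient.mk_eq_zero]
    obtain ⟨y, hy⟩ := this
    have hQdx : Qd (x : V) = 0 := (key x x.2).2
    have hxy : Q y = (x : V) := hy
    have : (inner ℂ (x : V) (x : V) : ℂ) = 0 := by
      calc (inner ℂ (x : V) (x : V) : ℂ) = inner ℂ (Q y) (x : V) := by rw [hxy]
        _ = inner ℂ y ((LinearMap.adjoint Q) (x : V)) := (LinearMap.adjoint_inner_right Q _ _).symm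
        _ = 0 := by rw [← hQd, hQdx, inner_zero_right]
    have hx0 : (x : V) = 0 := inner_self_eq_zero.mp this
    exact Subtype.ext (by exact_mod_cast hx0)
  · -- surjective
    intro c
    obtain ⟨x, rfl⟩ := Submodule.mkQ_surjective _ c
    -- decompose x = p + q, p ∈ range Q, q ∈ (range Q)ᗮ
    obtain ⟨p, hp, q, hq, hxpq⟩ :=
      (LinearMap.range Q).exists_add_mem_mem_orthogonal (x : V)
    have hqQd : Qd q = 0 := by
      have : ∀ y : V, (inner ℂ y (Qd q) : ℂ) = 0 := by
        intro y
        rw [hQd, LinearMap.adjoint_inner_right]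
        exact (Submodule.mem_orthogonal _ _).mp hq (Q y) ⟨y, rfl⟩
      have := this (Qd q)
      exact inner_self_eq_zero.mp (by rwa [] at this)
    have hpker : Q p = 0 := by
      obtain ⟨z, rfl⟩ := hp
      have := DFunLike.congr_fun hQ z
      simpa using this
    have hqker : Q q = 0 := by
      have hx : Q (x : V) = 0 := x.2
      have := hx
      rw [hxpq, map_add, hpker, zero_add] at this
      exact this
    have hqH : H q = 0 := by
      rw [hH]; simp [hqker, hqQd, hQd.symm ▸ hqQd]
    refine ⟨⟨q, hqH⟩, ?_⟩
    show Submodule.Quotient.mk (Submodule.inclusion hsub ⟨q, hqH⟩) = Submodule.Quotient.mk x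
    rw [Submodule.Quotient.eq]
    refine Submodule.mem_comap.mpr ?_
    have hcoe : ((Submodule.inclusion hsub ⟨q, hqH⟩ - x : ↥(LinearMap.ker Q)) : V) = q - (x : V) := rfl
    show ((Submodule.inclusion hsub ⟨q, hqH⟩ - x : ↥(LinearMap.ker Q)) : V) ∈ LinearMap.range Q
    rw [hcoe]
    have hqp : q - (x : V) = -p := by rw [hxpq]; abel
    rw [hqp]
    exact neg_mem hp
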